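/- Let K be a field and U a nonempty subset of K[[t]]. For a fixed sequence f = (fᵢ(t))_{i≥0} of elements of U, define αₖ(U, f) = Σ_{j=0}^{k-1} v_t(fₖ(t) − fⱼ(t)) where v_t is the t-adic valuation, and suppose f is a t-ordering, i.e., for each k ≥ 1, αₖ(U, f) = min over g ∈ U of Σ_{j=0}^{k-1} v_t(g − fⱼ). Then the sequence (αₖ(U, f))_{k≥0} is nondecreasing: α_{k+1}(U, f) ≥ αₖ(U, f) for all k ≥ 0. -/

import Mathlib

open PowerSeries in
/-- If `f` is a (plain) `t`-ordering of a nonempty subset `U ⊆ K[[t]]`, then the associated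
`t`-exponent sequence `αₖ = Σ_{j<k} v_t(fₖ - fⱼ)` is nondecreasing. -/
theorem t_ordering_exponents_monotone {K : Type*} [Field K]
    (U : Set (PowerSeries K)) (hU : U.Nonempty)
    (f : ℕ → PowerSeries K) (hf : ∀ i, f i ∈ U)
    (hord : ∀ k : ℕ, 1 ≤ k →
      (∑ j ∈ Finset.range k, (f k - f j).order) =
        ⨅ g ∈ U, ∑ j ∈ Finset.range k, (g - f j).order) :
    Monotone fun k => ∑ j ∈ Finset.range k, (f k - f j).order := by
  apply monotone_nat_of_le_succ
  intro k
  rcases Nat.eq_zero_or_pos k with rfl | hk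
  · exact zero_le
  · rw [hord k hk, hord (k + 1) (by omega)]
    refine le_iInf₂ fun g hg => ?_
    refine le_trans (iInf₂_le g hg) ?_
    exact Finset.sum_le_sum_of_subset (Finset.range_subset_range.2 (Nat.le_succ k))
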